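/- Fix β, γ, θ with γ ≠ 0 and β ≠ 0, θ ∈ (0,1). As a function of α, the absolute bias |δ(α)| with δ(α) = log(1 + e^α(b₁−b₂)(1−e^γ)/((1+e^{α+γ}b₁)(1+e^α b₂))) is maximized (in absolute value) at α* = −(log(b₁b₂) + γ)/2, i.e., the derivative of δ with respect to α vanishes at α*. -/

import Mathlib

theorem bias_critical_point (β γ θ : ℝ) (hβ : β ≠ 0) (hγ : γ ≠ 0)
    (hθ : θ ∈ Set.Ioo (0:ℝ) 1) :
    let b₁ := Real.exp β * (1 - θ) + θ
    let b₂ := Real.exp β / (Real.exp β * θ + 1 - θ)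
    let δ : ℝ → ℝ := fun a => Real.log (1 + Real.exp a * (b₁ - b₂) * (1 - Real.exp γ) /
        ((1 + Real.exp (a + γ) * b₁) * (1 + Real.exp a * b₂)))
    deriv δ (-(Real.log (b₁ * b₂) + γ) / 2) = 0 := by
  intro b₁ b₂ δ
  obtain ⟨hθ0, hθ1⟩ := hθ
  have hden : 0 < Real.exp β * θ + 1 - θ := by nlinarith [Real.exp_pos β]
  have hb₁ : 0 < b₁ := by
    have := Real.exp_pos β; unfold b₁; nlinarith
  have hb₂ : 0 < b₂ := div_pos (Real.exp_pos β) hden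
  set m : ℝ := -(Real.log (b₁ * b₂) + γ) / 2 with hm
  have hexp2m : Real.exp (2 * m) = Real.exp (-γ) / (b₁ * b₂) := by
    have h2m : 2 * m = -Real.log (b₁ * b₂) + -γ := by rw [hm]; ring
    rw [h2m, Real.exp_add, Real.exp_neg, Real.exp_log (mul_pos hb₁ hb₂)]
    ring
  have key : ∀ x, δ (2 * m - x) = δ x := by
    intro x
    show Real.log _ = Real.log _
    congr 1
    have e1 : Real.exp (2 * m - x) = Real.exp (-γ) / (b₁ * b₂) / Real.exp x := by
      rw [Real.exp_sub, hexp2m]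
    have e2 : Real.exp (2 * m - x + γ) = Real.exp (-γ) / (b₁ * b₂) / Real.exp x * Real.exp γ := by
      rw [Real.exp_add, Real.exp_sub, hexp2m]
    rw [e1, e2]
    have hx := Real.exp_pos x
    have hg := Real.exp_pos γ
    have hng := Real.exp_pos (-γ)
    have hgg : Real.exp (-γ) * Real.exp γ = 1 := by
      rw [← Real.exp_add]; simp
    have d1 : (0:ℝ) < 1 + Real.exp (x + γ) * b₁ := by
      have := Real.exp_pos (x + γ); nlinarith
    have d2 : (0:ℝ) < 1 + Real.exp x * b₂ := by nlinarith
    have d3 : (0:ℝ) < 1 + Real.exp (-γ) / (b₁ * b₂) / Real.exp x * Real.exp γ * b₁ := by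
      positivity
    have d4 : (0:ℝ) < 1 + Real.exp (-γ) / (b₁ * b₂) / Real.exp x * b₂ := by
      positivity
    have exg : Real.exp (x + γ) = Real.exp x * Real.exp γ := Real.exp_add x γ
    rw [exg] at d1 ⊢
    rw [Real.exp_neg]
    field_simp
    ring
  -- derivative is zero by symmetry
  by_cases hd : DifferentiableAt ℝ δ m
  · have h1 : HasDerivAt (fun x : ℝ => 2 * m - x) (-1) m := by
      simpa using (hasDerivAt_id' m).const_sub (2*m)
    have h2 : HasDerivAt δ (deriv δ m) (2 * m - m) := by
      have : 2 * m - m = m := by ring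
      rw [this]; exact hd.hasDerivAt
    have h3 : HasDerivAt (fun x => δ (2 * m - x)) (deriv δ m * (-1)) m :=
      HasDerivAt.comp m h2 h1
    have h4 : HasDerivAt δ (deriv δ m * (-1)) m := by
      have hfun : (fun x => δ (2 * m - x)) = δ := funext key
      rwa [hfun] at h3
    have := h4.deriv
    linarith [hd.hasDerivAt.deriv, this]
  · exact deriv_zero_of_not_differentiableAt hd
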